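/- Let v, c, w, u ∈ Q and let 1 ≤ i, k, r, p ≤ m with i ≠ k and r ≠ p. Then the four-fold commutator [[E*_{i,v}, E*_{k,c}], [E_{r,w}, E*_{p,u}]] acts on M as follows: (1) if k = r, it sends (z,x,f) to (z, x, f + f_p(x)·⟨w,u⟩·⟨v,c⟩·f_i − f_i(x)·⟨c,v⟩·⟨u,w⟩·f_p) (which is the identity when moreover i = p); (2) if i = r, it sends (z,x,f) to (z, x, f − f_p(x)·⟨w,u⟩·⟨c,v⟩·f_k + f_k(x)·⟨v,c⟩·⟨u,w⟩·f_p) (which is the identity when moreover k = p); (3) if i ≠ r and k ≠ r, it is the identity automorphism of M. -/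

import Mathlib

open QuadraticMap
open scoped commutatorElement

/-- The DSER elementary orthogonal transformation `E_{i,w}` on `M = Q ⊕ P ⊕ P*`,
`P = A^m`:  `E_{i,w}(z,x,f) = (z − f(xᵢ)•w, x + ⟨w,z⟩•xᵢ − f(xᵢ)·q(w)•xᵢ, f)`. -/
noncomputable def Eplus {A Q : Type*} [CommRing A] [AddCommGroup Q] [Module A Q]
    {m : ℕ} (q : QuadraticForm A Q) (i : Fin m) (w : Q) :
    (Q × (Fin m → A) × (Fin m → A)) ≃ₗ[A] (Q × (Fin m → A) × (Fin m → A)) where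
  toFun p := (p.1 - p.2.2 i • w,
    p.2.1 + polar ⇑q w p.1 • (Pi.single i 1 : Fin m → A)
      - (p.2.2 i * q w) • (Pi.single i 1 : Fin m → A),
    p.2.2)
  invFun p := (p.1 + p.2.2 i • w,
    p.2.1 - polar ⇑q w p.1 • (Pi.single i 1 : Fin m → A)
      - (p.2.2 i * q w) • (Pi.single i 1 : Fin m → A),
    p.2.2)
  map_add' p p' := by
    obtain ⟨z, x, f⟩ := p
    obtain ⟨z', x', f'⟩ := p'
    refine Prod.ext ?_ (Prod.ext ?_ rfl)
    · show z + z' - (f i + f' i) • w = (z - f i • w) + (z' - f' i • w)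
      module
    · show x + x' + polar ⇑q w (z + z') • (Pi.single i 1 : Fin m → A)
        - ((f i + f' i) * q w) • (Pi.single i 1 : Fin m → A) = _
      rw [polar_add_right]
      show _ = (x + polar ⇑q w z • (Pi.single i 1 : Fin m → A) - (f i * q w) • (Pi.single i 1 : Fin m → A))
        + (x' + polar ⇑q w z' • (Pi.single i 1 : Fin m → A) - (f' i * q w) • (Pi.single i 1 : Fin m → A))
      module
  map_smul' a p := by
    obtain ⟨z, x, f⟩ := p
    refine Prod.ext ?_ (Prod.ext ?_ rfl)
    · show a • z - (a • f) i • w = a • (z - f i • w)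
      simp only [Pi.smul_apply, smul_eq_mul]
      module
    · show a • x + polar ⇑q w (a • z) • (Pi.single i 1 : Fin m → A)
        - ((a • f) i * q w) • (Pi.single i 1 : Fin m → A)
        = a • (x + polar ⇑q w z • (Pi.single i 1 : Fin m → A) - (f i * q w) • (Pi.single i 1 : Fin m → A))
      rw [polar_smul_right]
      simp only [Pi.smul_apply, smul_eq_mul]
      module
  left_inv p := by
    obtain ⟨z, x, f⟩ := p
    refine Prod.ext ?_ (Prod.ext ?_ rfl)
    · show z - f i • w + f i • w = z
      module
    · show x + polar ⇑q w z • (Pi.single i 1 : Fin m → A) - (f i * q w) • (Pi.single i 1 : Fin m → A)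
        - polar ⇑q w (z - f i • w) • (Pi.single i 1 : Fin m → A)
        - (f i * q w) • (Pi.single i 1 : Fin m → A) = x
      rw [polar_sub_right, polar_smul_right, polar_self]
      simp only [smul_eq_mul]
      module
  right_inv p := by
    obtain ⟨z, x, f⟩ := p
    refine Prod.ext ?_ (Prod.ext ?_ rfl)
    · show z + f i • w - f i • w = z
      module
    · show x - polar ⇑q w z • (Pi.single i 1 : Fin m → A) - (f i * q w) • (Pi.single i 1 : Fin m → A)
        + polar ⇑q w (z + f i • w) • (Pi.single i 1 : Fin m → A)
        - (f i * q w) • (Pi.single i 1 : Fin m → A) = x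
      rw [polar_add_right, polar_smul_right, polar_self]
      simp only [smul_eq_mul]
      module

/-- The DSER elementary orthogonal transformation `E*_{i,w}` on `M = Q ⊕ P ⊕ P*`:
`E*_{i,w}(z,x,f) = (z − fᵢ(x)•w, x, f + ⟨w,z⟩•fᵢ − fᵢ(x)·q(w)•fᵢ)`. -/
noncomputable def Estar {A Q : Type*} [CommRing A] [AddCommGroup Q] [Module A Q]
    {m : ℕ} (q : QuadraticForm A Q) (i : Fin m) (w : Q) :
    (Q × (Fin m → A) × (Fin m → A)) ≃ₗ[A] (Q × (Fin m → A) × (Fin m → A)) where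
  toFun p := (p.1 - p.2.1 i • w,
    p.2.1,
    p.2.2 + polar ⇑q w p.1 • (Pi.single i 1 : Fin m → A)
      - (p.2.1 i * q w) • (Pi.single i 1 : Fin m → A))
  invFun p := (p.1 + p.2.1 i • w,
    p.2.1,
    p.2.2 - polar ⇑q w p.1 • (Pi.single i 1 : Fin m → A)
      - (p.2.1 i * q w) • (Pi.single i 1 : Fin m → A))
  map_add' p p' := by
    obtain ⟨z, x, f⟩ := p
    obtain ⟨z', x', f'⟩ := p'
    refine Prod.ext ?_ (Prod.ext rfl ?_)
    · show z + z' - (x i + x' i) • w = (z - x i • w) + (z' - x' i • w)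
      module
    · show f + f' + polar ⇑q w (z + z') • (Pi.single i 1 : Fin m → A)
        - ((x i + x' i) * q w) • (Pi.single i 1 : Fin m → A) = _
      rw [polar_add_right]
      show _ = (f + polar ⇑q w z • (Pi.single i 1 : Fin m → A)
          - (x i * q w) • (Pi.single i 1 : Fin m → A))
        + (f' + polar ⇑q w z' • (Pi.single i 1 : Fin m → A)
          - (x' i * q w) • (Pi.single i 1 : Fin m → A))
      module
  map_smul' a p := by
    obtain ⟨z, x, f⟩ := p
    refine Prod.ext ?_ (Prod.ext rfl ?_)
    · show a • z - (a • x) i • w = a • (z - x i • w)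
      simp only [Pi.smul_apply, smul_eq_mul]
      module
    · show a • f + polar ⇑q w (a • z) • (Pi.single i 1 : Fin m → A)
        - ((a • x) i * q w) • (Pi.single i 1 : Fin m → A)
        = a • (f + polar ⇑q w z • (Pi.single i 1 : Fin m → A)
          - (x i * q w) • (Pi.single i 1 : Fin m → A))
      rw [polar_smul_right]
      simp only [Pi.smul_apply, smul_eq_mul]
      module
  left_inv p := by
    obtain ⟨z, x, f⟩ := p
    refine Prod.ext ?_ (Prod.ext rfl ?_)
    · show z - x i • w + x i • w = z
      module
    · show f + polar ⇑q w z • (Pi.single i 1 : Fin m → A)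
        - (x i * q w) • (Pi.single i 1 : Fin m → A)
        - polar ⇑q w (z - x i • w) • (Pi.single i 1 : Fin m → A)
        - (x i * q w) • (Pi.single i 1 : Fin m → A) = f
      rw [polar_sub_right, polar_smul_right, polar_self]
      simp only [smul_eq_mul]
      module
  right_inv p := by
    obtain ⟨z, x, f⟩ := p
    refine Prod.ext ?_ (Prod.ext rfl ?_)
    · show z + x i • w - x i • w = z
      module
    · show f - polar ⇑q w z • (Pi.single i 1 : Fin m → A)
        - (x i * q w) • (Pi.single i 1 : Fin m → A)
        + polar ⇑q w (z + x i • w) • (Pi.single i 1 : Fin m → A)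
        - (x i * q w) • (Pi.single i 1 : Fin m → A) = f
      rw [polar_add_right, polar_smul_right, polar_self]
      simp only [smul_eq_mul]
      module

section Aux
variable {A Q : Type*} [CommRing A] [AddCommGroup Q] [Module A Q]
  {m : ℕ} (q : QuadraticForm A Q)

local notation "M" => (Q × (Fin m → A) × (Fin m → A))

lemma mul_apply' (a b : M ≃ₗ[A] M) (x : M) : (a * b) x = a (b x) := rfl
lemma inv_eq_symm (a : M ≃ₗ[A] M) : a⁻¹ = a.symm := rfl

lemma Estar_apply (i : Fin m) (w : Q) (z : Q) (x f : Fin m → A) :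
    Estar q i w (z, x, f) = (z - x i • w, x,
      f + polar ⇑q w z • (Pi.single i 1 : Fin m → A) - (x i * q w) • (Pi.single i 1 : Fin m → A)) := rfl

lemma Estar_symm_apply (i : Fin m) (w : Q) (z : Q) (x f : Fin m → A) :
    (Estar q i w).symm (z, x, f) = (z + x i • w, x,
      f - polar ⇑q w z • (Pi.single i 1 : Fin m → A) - (x i * q w) • (Pi.single i 1 : Fin m → A)) := rfl

lemma Eplus_apply (i : Fin m) (w : Q) (z : Q) (x f : Fin m → A) :
    Eplus q i w (z, x, f) = (z - f i • w,
      x + polar ⇑q w z • (Pi.single i 1 : Fin m → A) - (f i * q w) • (Pi.single i 1 : Fin m → A), f) := rfl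

lemma Eplus_symm_apply (i : Fin m) (w : Q) (z : Q) (x f : Fin m → A) :
    (Eplus q i w).symm (z, x, f) = (z + f i • w,
      x - polar ⇑q w z • (Pi.single i 1 : Fin m → A) - (f i * q w) • (Pi.single i 1 : Fin m → A), f) := rfl

lemma Gform (i k : Fin m) (hik : i ≠ k) (v c : Q) (z : Q) (x f : Fin m → A) :
    ⁅Estar q i v, Estar q k c⁆ (z, x, f) = (z, x,
      f + (x i * polar ⇑q c v) • (Pi.single k 1 : Fin m → A)
        - (x k * polar ⇑q v c) • (Pi.single i 1 : Fin m → A)) := by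
  show (Estar q i v * Estar q k c * (Estar q i v)⁻¹ * (Estar q k c)⁻¹) (z, x, f) = _
  simp only [mul_apply', inv_eq_symm, Estar_symm_apply, Estar_apply]
  refine Prod.ext ?_ (Prod.ext rfl ?_) <;> dsimp only
  · module
  · simp only [polar_add_right, polar_sub_right, polar_smul_right, polar_self]
    simp only [smul_eq_mul, nsmul_eq_mul, Nat.cast_ofNat]
    module

lemma Hform (r p : Fin m) (hrp : r ≠ p) (w u : Q) (z : Q) (x f : Fin m → A) :
    ⁅Eplus q r w, Estar q p u⁆ (z, x, f) = (z,
      x - (x p * polar ⇑q w u) • (Pi.single r 1 : Fin m → A),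
      f + (f r * polar ⇑q u w) • (Pi.single p 1 : Fin m → A)) := by
  show (Eplus q r w * Estar q p u * (Eplus q r w)⁻¹ * (Estar q p u)⁻¹) (z, x, f) = _
  simp only [mul_apply', inv_eq_symm, Estar_symm_apply, Eplus_symm_apply, Estar_apply, Eplus_apply]
  simp only [Pi.add_apply, Pi.sub_apply, Pi.smul_apply, smul_eq_mul,
    Pi.single_eq_of_ne hrp, Pi.single_eq_of_ne hrp.symm, Pi.single_eq_same,
    mul_zero, mul_one, sub_zero, add_zero]
  refine Prod.ext ?_ (Prod.ext ?_ ?_) <;> dsimp only <;>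
    · try simp only [polar_add_right, polar_sub_right, polar_smul_right, polar_self]
      try simp only [smul_eq_mul, nsmul_eq_mul, Nat.cast_ofNat]
      module

lemma Ginv (i k : Fin m) (hik : i ≠ k) (v c : Q) (z : Q) (x f : Fin m → A) :
    (⁅Estar q i v, Estar q k c⁆)⁻¹ (z, x, f) = (z, x,
      f - (x i * polar ⇑q c v) • (Pi.single k 1 : Fin m → A)
        + (x k * polar ⇑q v c) • (Pi.single i 1 : Fin m → A)) := by
  rw [inv_eq_symm, LinearEquiv.symm_apply_eq, Gform q i k hik]
  refine Prod.ext rfl (Prod.ext rfl ?_) <;> dsimp only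
  module

lemma Hinv (r p : Fin m) (hrp : r ≠ p) (w u : Q) (z : Q) (x f : Fin m → A) :
    (⁅Eplus q r w, Estar q p u⁆)⁻¹ (z, x, f) = (z,
      x + (x p * polar ⇑q w u) • (Pi.single r 1 : Fin m → A),
      f - (f r * polar ⇑q u w) • (Pi.single p 1 : Fin m → A)) := by
  rw [inv_eq_symm, LinearEquiv.symm_apply_eq, Hform q r p hrp]
  simp only [Pi.add_apply, Pi.sub_apply, Pi.smul_apply, smul_eq_mul,
    Pi.single_eq_of_ne hrp, Pi.single_eq_of_ne hrp.symm, Pi.single_eq_same,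
    mul_zero, mul_one, sub_zero, add_zero]
  refine Prod.ext rfl (Prod.ext ?_ ?_) <;> dsimp only <;> module

end Aux

theorem fourfold_commutator_EstarEstar_EplusEstar
    {A Q : Type*} [CommRing A] [Invertible (2 : A)] [AddCommGroup Q] [Module A Q]
    {m : ℕ} (q : QuadraticForm A Q) (i k r p : Fin m)
    (hik : i ≠ k) (hrp : r ≠ p) (v c w u : Q) :
    (k = r → ∀ (z : Q) (x f : Fin m → A),
      ⁅⁅Estar q i v, Estar q k c⁆, ⁅Eplus q r w, Estar q p u⁆⁆ (z, x, f)
        = (z, x,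
           f + (x p * polar ⇑q w u * polar ⇑q v c) • (Pi.single i 1 : Fin m → A)
             - (x i * polar ⇑q c v * polar ⇑q u w) • (Pi.single p 1 : Fin m → A))) ∧
    (k = r → i = p → ⁅⁅Estar q i v, Estar q k c⁆, ⁅Eplus q r w, Estar q p u⁆⁆ = 1) ∧
    (i = r → ∀ (z : Q) (x f : Fin m → A),
      ⁅⁅Estar q i v, Estar q k c⁆, ⁅Eplus q r w, Estar q p u⁆⁆ (z, x, f)
        = (z, x,
           f - (x p * polar ⇑q w u * polar ⇑q c v) • (Pi.single k 1 : Fin m → A)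
             + (x k * polar ⇑q v c * polar ⇑q u w) • (Pi.single p 1 : Fin m → A))) ∧
    (i = r → k = p → ⁅⁅Estar q i v, Estar q k c⁆, ⁅Eplus q r w, Estar q p u⁆⁆ = 1) ∧
    (i ≠ r → k ≠ r → ⁅⁅Estar q i v, Estar q k c⁆, ⁅Eplus q r w, Estar q p u⁆⁆ = 1) := by
  refine ⟨?_, ?_, ?_, ?_, ?_⟩
  · intro hkr z x f
    subst hkr
    rw [commutatorElement_def ⁅Estar q i v, Estar q k c⁆ ⁅Eplus q k w, Estar q p u⁆]
    simp only [mul_apply']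
    rw [Hinv q _ _ hrp w u, Ginv q _ _ hik v c, Hform q _ _ hrp w u, Gform q _ _ hik v c]
    simp only [Pi.add_apply, Pi.sub_apply, Pi.smul_apply, smul_eq_mul,
      Pi.single_eq_same, Pi.single_eq_of_ne hik, Pi.single_eq_of_ne hik.symm,
      Pi.single_eq_of_ne hrp, Pi.single_eq_of_ne hrp.symm,
      mul_zero, zero_mul, mul_one, sub_zero, add_zero]
    refine Prod.ext rfl (Prod.ext ?_ ?_) <;> dsimp only <;> module
  · intro hkr hip
    subst hkr; subst hip
    apply LinearEquiv.ext
    rintro ⟨z, x, f⟩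
    rw [commutatorElement_def ⁅Estar q i v, Estar q k c⁆ ⁅Eplus q k w, Estar q i u⁆]
    simp only [mul_apply']
    rw [Hinv q _ _ hrp w u, Ginv q _ _ hik v c, Hform q _ _ hrp w u, Gform q _ _ hik v c]
    simp only [Pi.add_apply, Pi.sub_apply, Pi.smul_apply, smul_eq_mul,
      Pi.single_eq_same, Pi.single_eq_of_ne hik, Pi.single_eq_of_ne hik.symm,
      Pi.single_eq_of_ne hrp, Pi.single_eq_of_ne hrp.symm,
      mul_zero, zero_mul, mul_one, sub_zero, add_zero]
    show _ = (z, x, f)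
    rw [polar_comm (⇑q) c v, polar_comm (⇑q) u w]
    refine Prod.ext rfl (Prod.ext ?_ ?_) <;> dsimp only <;> module
  · intro hir z x f
    subst hir
    rw [commutatorElement_def ⁅Estar q i v, Estar q k c⁆ ⁅Eplus q i w, Estar q p u⁆]
    simp only [mul_apply']
    rw [Hinv q _ _ hrp w u, Ginv q _ _ hik v c, Hform q _ _ hrp w u, Gform q _ _ hik v c]
    simp only [Pi.add_apply, Pi.sub_apply, Pi.smul_apply, smul_eq_mul,
      Pi.single_eq_same, Pi.single_eq_of_ne hik, Pi.single_eq_of_ne hik.symm,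
      Pi.single_eq_of_ne hrp, Pi.single_eq_of_ne hrp.symm,
      mul_zero, zero_mul, mul_one, sub_zero, add_zero]
    refine Prod.ext rfl (Prod.ext ?_ ?_) <;> dsimp only <;> module
  · intro hir hkp
    subst hir; subst hkp
    apply LinearEquiv.ext
    rintro ⟨z, x, f⟩
    rw [commutatorElement_def ⁅Estar q i v, Estar q k c⁆ ⁅Eplus q i w, Estar q k u⁆]
    simp only [mul_apply']
    rw [Hinv q _ _ hrp w u, Ginv q _ _ hik v c, Hform q _ _ hrp w u, Gform q _ _ hik v c]
    simp only [Pi.add_apply, Pi.sub_apply, Pi.smul_apply, smul_eq_mul,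
      Pi.single_eq_same, Pi.single_eq_of_ne hik, Pi.single_eq_of_ne hik.symm,
      Pi.single_eq_of_ne hrp, Pi.single_eq_of_ne hrp.symm,
      mul_zero, zero_mul, mul_one, sub_zero, add_zero]
    show _ = (z, x, f)
    rw [polar_comm (⇑q) c v, polar_comm (⇑q) u w]
    refine Prod.ext rfl (Prod.ext ?_ ?_) <;> dsimp only <;> module
  · intro hir hkr
    apply LinearEquiv.ext
    rintro ⟨z, x, f⟩
    rw [commutatorElement_def ⁅Estar q i v, Estar q k c⁆ ⁅Eplus q r w, Estar q p u⁆]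
    simp only [mul_apply']
    rw [Hinv q _ _ hrp w u, Ginv q _ _ hik v c, Hform q _ _ hrp w u, Gform q _ _ hik v c]
    simp only [Pi.add_apply, Pi.sub_apply, Pi.smul_apply, smul_eq_mul,
      Pi.single_eq_same, Pi.single_eq_of_ne hik, Pi.single_eq_of_ne hik.symm,
      Pi.single_eq_of_ne hrp, Pi.single_eq_of_ne hrp.symm,
      Pi.single_eq_of_ne hir, Pi.single_eq_of_ne hir.symm,
      Pi.single_eq_of_ne hkr, Pi.single_eq_of_ne hkr.symm,
      mul_zero, zero_mul, mul_one, sub_zero, add_zero]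
    show _ = (z, x, f)
    refine Prod.ext rfl (Prod.ext ?_ ?_) <;> dsimp only <;> module
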